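/- Let n ∈ (0, 3/2), θ = 0, and for κ > 0 let H_κ be a solution of H^{n−1}H''' = −1 + x with H_κ(0) = H_κ'(0) = 0 that is positive as long as it exists in (0,1] and satisfies the asymptotics H_κ = κx²(1 + O(κ^{−n}x^{3−2n} + κ^{−n}x^{4−2n})), H_κ' = 2κx(1 + O(κ^{−n}x^{3−2n} + κ^{−n}x^{4−2n})), H_κ'' = 2κ(1 + O(κ^{−n}x^{3−2n} + κ^{−n}x^{4−2n})) as x ↘ 0 (constants depending only on n). Then: (undershoot) there is κ₀ > 0 such that for all 0 < κ ≤ κ₀ there exists x* ∈ (0,1] with H_κ'(x*) ≤ 0; and (overshoot) there is κ₁ > 0 such that for all κ ≥ κ₁, H_κ stays positive on (0,1] with H_κ' > 0 on (0,1] and in particular H_κ'(1) > 0. -/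

import Mathlib

open Set Filter

/-- A local solution of the thin-film similarity ODE with zero contact angle and
limiting half-curvature `κ` at the contact line: `H ∈ C¹([0,1]) ∩ C³((0,1))`,
`H(0) = 0`, `H'(0) = 0`, `H^{n-1}H''' = -1 + x` holds at each `x ∈ (0,1)` as long as `H`
is positive on `(0,x]`, and the asymptotics
`H = κx²(1 + O(κ^{-n}x^{3-2n} + κ^{-n}x^{4-2n}))` (and likewise for `H'`, `H''`) hold
with `O`-constant `C` wherever `κ^{-n}(x^{3-2n}+x^{4-2n}) ≤ 1/C`. -/
def ShootSolZero (n C κ : ℝ) (H : ℝ → ℝ) : Prop :=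
  ContDiffOn ℝ 1 H (Set.Icc 0 1) ∧
  ContDiffOn ℝ 3 H (Set.Ioo 0 1) ∧
  H 0 = 0 ∧
  derivWithin H (Set.Icc 0 1) 0 = 0 ∧
  (∀ x ∈ Set.Ioo (0:ℝ) 1, (∀ y ∈ Set.Ioc (0:ℝ) x, 0 < H y) →
    H x ^ (n - 1) * deriv^[3] H x = -1 + x) ∧
  (∀ x ∈ Set.Ioo (0:ℝ) 1,
    κ ^ (-n) * (x ^ (3 - 2*n) + x ^ (4 - 2*n)) ≤ 1 / C →
      0 < H x ∧
      |H x - κ * x ^ 2| ≤ C * κ * x ^ 2 * (κ ^ (-n) * (x ^ (3 - 2*n) + x ^ (4 - 2*n))) ∧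
      |deriv H x - 2 * κ * x| ≤ C * κ * x * (κ ^ (-n) * (x ^ (3 - 2*n) + x ^ (4 - 2*n))) ∧
      |deriv (deriv H) x - 2 * κ| ≤ C * κ * (κ ^ (-n) * (x ^ (3 - 2*n) + x ^ (4 - 2*n))))


lemma rpow_small_beats (B e : ℝ) (hB : 0 < B) (he : e < 1) :
    ∃ κ₀ > 0, ∀ κ : ℝ, 0 < κ → κ ≤ κ₀ → 100 * κ < B * κ ^ e := by
  refine ⟨(101 / B) ^ (e - 1)⁻¹, Real.rpow_pos_of_pos (by positivity) _, fun κ hκ hκ₀ => ?_⟩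
  have hne : e - 1 ≠ 0 := by linarith
  have h1 : ((101 / B) ^ (e - 1)⁻¹ : ℝ) ^ (e - 1) ≤ κ ^ (e - 1) :=
    Real.rpow_le_rpow_of_nonpos hκ hκ₀ (by linarith)
  rw [Real.rpow_inv_rpow (by positivity) hne] at h1
  have h2 : κ ^ e = κ ^ (e - 1) * κ := by
    rw [← Real.rpow_add_one hκ.ne' (e-1)]; ring_nf
  have h4 : B * κ ^ e = (B * κ ^ (e-1)) * κ := by rw [h2]; ring
  rw [h4]
  have h3 : 101 ≤ B * κ ^ (e-1) := by
    calc (101:ℝ) = B * (101/B) := by field_simp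
    _ ≤ B * κ ^ (e-1) := mul_le_mul_of_nonneg_left h1 hB.le
  nlinarith


set_option maxHeartbeats 2000000 in
lemma undershoot_aux (n C κ δ : ℝ) (hn0 : 0 < n) (hn : n < 3/2) (hC : 0 < C)
    (hκ : 0 < κ) (hδ0 : 0 < δ) (hδ4 : δ ≤ 1/4)
    (hδa : κ ^ (-n) * (δ ^ (3 - 2*n) + δ ^ (4 - 2*n)) ≤ 1/(2*C))
    (hm1 : 100 * κ < (κ * δ^2 / 2) ^ (1 - n))
    (hm2 : 100 * κ < (5 * κ) ^ (1 - n))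
    (H : ℝ → ℝ) (hH : ShootSolZero n C κ H)
    (hpos : ∀ x ∈ Set.Ioc (0:ℝ) 1, 0 < derivWithin H (Set.Icc 0 1) x) : False := by
  obtain ⟨hC1, hC3, hH0, -, hODE, hAsym⟩ := hH
  have hIoo : Ioo (0:ℝ) 1 ⊆ Icc 0 1 := Ioo_subset_Icc_self
  have hdiff : ∀ x ∈ Ioo (0:ℝ) 1, DifferentiableAt ℝ H x := fun x hx =>
    ((hC3 x hx).contDiffAt (isOpen_Ioo.mem_nhds hx)).differentiableAt (by norm_num)
  have hderiv_eq : ∀ x ∈ Ioo (0:ℝ) 1, derivWithin H (Icc 0 1) x = deriv H x := fun x hx =>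
    (hdiff x hx).derivWithin (uniqueDiffOn_Icc one_pos x (hIoo hx))
  have hd1pos : ∀ x ∈ Ioo (0:ℝ) 1, 0 < deriv H x := fun x hx => by
    rw [← hderiv_eq x hx]; exact hpos x ⟨hx.1, hx.2.le⟩
  have Hmono : StrictMonoOn H (Icc 0 1) :=
    strictMonoOn_of_deriv_pos (convex_Icc 0 1) hC1.continuousOn
      (by rw [interior_Icc]; exact hd1pos)
  have Hpos : ∀ x ∈ Ioc (0:ℝ) 1, 0 < H x := fun x hx => by
    have := Hmono (left_mem_Icc.2 zero_le_one) ⟨hx.1.le, hx.2⟩ hx.1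
    rwa [hH0] at this
  have hC2 : ContDiffOn ℝ 2 (deriv H) (Ioo 0 1) := hC3.deriv_of_isOpen isOpen_Ioo (by norm_num)
  have hC1' : ContDiffOn ℝ 1 (deriv (deriv H)) (Ioo 0 1) :=
    hC2.deriv_of_isOpen isOpen_Ioo (by norm_num)
  have hd1cont : ContinuousOn (deriv H) (Ioo 0 1) := hC2.continuousOn
  have hd2cont : ContinuousOn (deriv (deriv H)) (Ioo 0 1) := hC1'.continuousOn
  have hd1diff : ∀ x ∈ Ioo (0:ℝ) 1, DifferentiableAt ℝ (deriv H) x := fun x hx =>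
    ((hC2 x hx).contDiffAt (isOpen_Ioo.mem_nhds hx)).differentiableAt (by norm_num)
  have hd2diff : ∀ x ∈ Ioo (0:ℝ) 1, DifferentiableAt ℝ (deriv (deriv H)) x := fun x hx =>
    ((hC1' x hx).contDiffAt (isOpen_Ioo.mem_nhds hx)).differentiableAt (by norm_num)
  -- ODE rewritten
  have hODE' : ∀ x ∈ Ioo (0:ℝ) 1, deriv (deriv (deriv H)) x = (-1 + x) * (H x) ^ (1 - n) := by
    intro x hx
    have hxpos : 0 < H x := Hpos x ⟨hx.1, hx.2.le⟩
    have heq := hODE x hx (fun y hy => Hpos y ⟨hy.1, hy.2.trans hx.2.le⟩)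
    have h2 : (H x) ^ (n-1) * (H x) ^ (1-n) = 1 := by
      rw [← Real.rpow_add hxpos]; norm_num
    have h3 : deriv^[3] H x = deriv (deriv (deriv H)) x := rfl
    rw [h3] at heq
    calc deriv (deriv (deriv H)) x
        = ((H x) ^ (n-1) * (H x) ^ (1-n)) * deriv (deriv (deriv H)) x := by rw [h2]; ring
      _ = (H x ^ (n-1) * deriv (deriv (deriv H)) x) * (H x) ^ (1-n) := by ring
      _ = (-1 + x) * (H x) ^ (1-n) := by rw [heq]
  have hd3neg : ∀ x ∈ Ioo (0:ℝ) 1, deriv (deriv (deriv H)) x < 0 := fun x hx => by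
    rw [hODE' x hx]
    exact mul_neg_of_neg_of_pos (by linarith [hx.2]) (Real.rpow_pos_of_pos (Hpos x ⟨hx.1, hx.2.le⟩) _)
  have h2anti : AntitoneOn (deriv (deriv H)) (Ioo 0 1) :=
    antitoneOn_of_deriv_nonpos (convex_Ioo 0 1) hd2cont
      (fun x hx => (hd2diff x (by rwa [interior_Ioo] at hx)).differentiableWithinAt)
      (fun x hx => (hd3neg x (by rwa [interior_Ioo] at hx)).le)
  -- asymptotics at δ
  have hδmem : δ ∈ Ioo (0:ℝ) 1 := ⟨hδ0, by linarith⟩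
  have hδa' : κ ^ (-n) * (δ ^ (3 - 2*n) + δ ^ (4 - 2*n)) ≤ 1 / C := by
    refine hδa.trans ?_
    rw [div_le_div_iff₀ (by positivity) hC]; linarith
  obtain ⟨-, hb0, hb1, hb2⟩ := hAsym δ hδmem hδa'
  have hq0 : (0:ℝ) ≤ κ ^ (-n) * (δ ^ (3 - 2*n) + δ ^ (4 - 2*n)) := by positivity
  have hb0' : |H δ - κ * δ ^ 2| ≤ κ * δ ^ 2 / 2 := by
    refine hb0.trans ?_
    calc C * κ * δ ^ 2 * (κ ^ (-n) * (δ ^ (3-2*n) + δ ^ (4-2*n)))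
        ≤ C * κ * δ ^ 2 * (1/(2*C)) := by
          exact mul_le_mul_of_nonneg_left hδa (by positivity)
      _ = κ * δ ^ 2 / 2 := by field_simp
  have hb1' : |deriv H δ - 2 * κ * δ| ≤ κ * δ / 2 := by
    refine hb1.trans ?_
    calc C * κ * δ * (κ ^ (-n) * (δ ^ (3-2*n) + δ ^ (4-2*n)))
        ≤ C * κ * δ * (1/(2*C)) := mul_le_mul_of_nonneg_left hδa (by positivity)
      _ = κ * δ / 2 := by field_simp
  have hb2' : |deriv (deriv H) δ - 2 * κ| ≤ κ / 2 := by
    refine hb2.trans ?_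
    calc C * κ * (κ ^ (-n) * (δ ^ (3-2*n) + δ ^ (4-2*n)))
        ≤ C * κ * (1/(2*C)) := mul_le_mul_of_nonneg_left hδa (by positivity)
      _ = κ / 2 := by field_simp
  rw [abs_le] at hb0' hb1' hb2'
  have hHδlow : κ * δ ^ 2 / 2 ≤ H δ := by linarith [hb0'.1]
  have hHδhigh : H δ ≤ 2 * κ * δ ^ 2 := by nlinarith [hb0'.2]
  have h1δ : deriv H δ ≤ 3 * κ * δ := by nlinarith [hb1'.2]
  have h2δ : deriv (deriv H) δ ≤ 5 * κ / 2 := by linarith [hb2'.2]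
  -- second-derivative bound on [δ, 1)
  have h2bound : ∀ x ∈ Ioo (0:ℝ) 1, δ ≤ x → deriv (deriv H) x ≤ 5 * κ / 2 := fun x hx hδx =>
    (h2anti hδmem hx hδx).trans h2δ
  have hsub : Ico δ 1 ⊆ Ioo (0:ℝ) 1 := fun x hx => ⟨lt_of_lt_of_le hδ0 hx.1, hx.2⟩
  -- first-derivative bound on [δ, 1)
  have h1bound : ∀ x ∈ Ico δ 1, deriv H x ≤ 4 * κ := by
    have hmonog : MonotoneOn (fun x => 5*κ/2*x - deriv H x) (Ico δ 1) := by
      refine monotoneOn_of_deriv_nonneg (convex_Ico δ 1)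
        ((continuousOn_const.mul continuousOn_id).sub (hd1cont.mono hsub)) ?_ ?_
      · intro x hx
        rw [interior_Ico] at hx
        have hx' : x ∈ Ioo (0:ℝ) 1 := hsub ⟨hx.1.le, hx.2⟩
        have hg : HasDerivAt (fun x => 5*κ/2*x - deriv H x) (5*κ/2*1 - deriv (deriv H) x) x :=
          ((hasDerivAt_id x).const_mul (5*κ/2)).sub (hd1diff x hx').hasDerivAt
        exact hg.differentiableAt.differentiableWithinAt
      · intro x hx
        rw [interior_Ico] at hx
        have hx' : x ∈ Ioo (0:ℝ) 1 := hsub ⟨hx.1.le, hx.2⟩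
        have hg : HasDerivAt (fun x => 5*κ/2*x - deriv H x) (5*κ/2*1 - deriv (deriv H) x) x :=
          ((hasDerivAt_id x).const_mul (5*κ/2)).sub (hd1diff x hx').hasDerivAt
        rw [hg.deriv]
        have := h2bound x hx' hx.1.le
        linarith
    intro x hx
    have hδm : δ ∈ Ico δ 1 := ⟨le_rfl, by linarith⟩
    have := hmonog hδm hx hx.1
    simp only at this
    have hxle : x ≤ 1 := hx.2.le
    nlinarith
  -- H bounds on [δ, 1)
  have hHup : ∀ x ∈ Ico δ 1, H x ≤ 5 * κ := by
    have hmonog : MonotoneOn (fun x => 4*κ*x - H x) (Ico δ 1) := by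
      refine monotoneOn_of_deriv_nonneg (convex_Ico δ 1)
        ((continuousOn_const.mul continuousOn_id).sub ((hC1.continuousOn).mono (hsub.trans hIoo))) ?_ ?_
      · intro x hx
        rw [interior_Ico] at hx
        have hx' : x ∈ Ioo (0:ℝ) 1 := hsub ⟨hx.1.le, hx.2⟩
        have hg : HasDerivAt (fun x => 4*κ*x - H x) (4*κ*1 - deriv H x) x :=
          ((hasDerivAt_id x).const_mul (4*κ)).sub (hdiff x hx').hasDerivAt
        exact hg.differentiableAt.differentiableWithinAt
      · intro x hx
        rw [interior_Ico] at hx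
        have hx' : x ∈ Ioo (0:ℝ) 1 := hsub ⟨hx.1.le, hx.2⟩
        have hg : HasDerivAt (fun x => 4*κ*x - H x) (4*κ*1 - deriv H x) x :=
          ((hasDerivAt_id x).const_mul (4*κ)).sub (hdiff x hx').hasDerivAt
        rw [hg.deriv]
        have := h1bound x ⟨hx.1.le, hx.2⟩
        linarith
    intro x hx
    have hδm : δ ∈ Ico δ 1 := ⟨le_rfl, by linarith⟩
    have := hmonog hδm hx hx.1
    simp only at this
    have hxle : x ≤ 1 := hx.2.le
    nlinarith
  have hHlow : ∀ x ∈ Ico δ 1, κ * δ ^ 2 / 2 ≤ H x := by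
    intro x hx
    refine hHδlow.trans ?_
    rcases eq_or_lt_of_le hx.1 with h | h
    · rw [h]
    · exact (Hmono (hIoo hδmem) ⟨(hδ0.trans_le hx.1).le, hx.2.le⟩ h).le
  -- lower bound on H^{1-n}
  set m : ℝ := min ((κ * δ^2 / 2) ^ (1 - n)) ((5 * κ) ^ (1 - n)) with hm_def
  have hm : 100 * κ < m := lt_min hm1 hm2
  have hrlow : ∀ x ∈ Ico δ 1, m ≤ (H x) ^ (1 - n) := by
    intro x hx
    have hxpos : 0 < H x := Hpos x ⟨hδ0.trans_le hx.1, hx.2.le⟩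
    rcases le_or_gt 0 (1 - n) with h | h
    · exact (min_le_left _ _).trans (Real.rpow_le_rpow (by positivity) (hHlow x hx) h)
    · exact (min_le_right _ _).trans (Real.rpow_le_rpow_of_nonpos hxpos (hHup x hx) h.le)
  -- H''(1/2) drop
  have hhalf : (1:ℝ)/2 ∈ Ioo (0:ℝ) 1 := by norm_num
  have hsub2 : Icc δ (1/2) ⊆ Ioo (0:ℝ) 1 := fun x hx =>
    ⟨lt_of_lt_of_le hδ0 hx.1, lt_of_le_of_lt hx.2 (by norm_num)⟩
  have h2half : deriv (deriv H) (1/2) ≤ 5*κ/2 - m/8 := by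
    have hmonog : MonotoneOn (fun x => -deriv (deriv H) x - (m/2)*x) (Icc δ (1/2)) := by
      refine monotoneOn_of_deriv_nonneg (convex_Icc δ (1/2))
        (((hd2cont.mono hsub2).neg).sub (continuousOn_const.mul continuousOn_id)) ?_ ?_
      · intro x hx
        rw [interior_Icc] at hx
        have hx' : x ∈ Ioo (0:ℝ) 1 := hsub2 ⟨hx.1.le, hx.2.le⟩
        have hg : HasDerivAt (fun x => -deriv (deriv H) x - (m/2)*x)
            (-deriv (deriv (deriv H)) x - (m/2)*1) x :=
          ((hd2diff x hx').hasDerivAt.neg).sub ((hasDerivAt_id x).const_mul (m/2))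
        exact hg.differentiableAt.differentiableWithinAt
      · intro x hx
        rw [interior_Icc] at hx
        have hx' : x ∈ Ioo (0:ℝ) 1 := hsub2 ⟨hx.1.le, hx.2.le⟩
        have hg : HasDerivAt (fun x => -deriv (deriv H) x - (m/2)*x)
            (-deriv (deriv (deriv H)) x - (m/2)*1) x :=
          ((hd2diff x hx').hasDerivAt.neg).sub ((hasDerivAt_id x).const_mul (m/2))
        rw [hg.deriv]
        have h3 : deriv (deriv (deriv H)) x = (-1 + x) * (H x) ^ (1-n) := hODE' x hx'
        have hr : m ≤ (H x) ^ (1-n) := hrlow x ⟨hx.1.le, by linarith [hx.2]⟩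
        have hx12 : x ≤ 1/2 := hx.2.le
        have hrnn : (0:ℝ) ≤ (H x) ^ (1-n) := (Real.rpow_pos_of_pos (Hpos x ⟨hx'.1, hx'.2.le⟩) _).le
        simp only [mul_one]
        have : (1 - x) * (H x) ^ (1-n) ≥ (1/2) * m := by
          apply mul_le_mul (by linarith) hr (by linarith [hm, hκ]) (by linarith)
        rw [h3]
        nlinarith
    have hδm : δ ∈ Icc δ (1/2) := ⟨le_rfl, by linarith⟩
    have h12m : (1:ℝ)/2 ∈ Icc δ (1/2) := ⟨by linarith, le_rfl⟩
    have := hmonog hδm h12m (by linarith)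
    simp only at this
    nlinarith [hm, hκ]
  -- contradiction at x = 1
  set φ := derivWithin H (Icc 0 1) with hφ_def
  have φcont : ContinuousOn φ (Icc 0 1) :=
    hC1.continuousOn_derivWithin (uniqueDiffOn_Icc one_pos) le_rfl
  set c : ℝ := m/8 - 5*κ/2 with hc_def
  have hcpos : 0 < c := by simp only [hc_def]; linarith [hm, hκ]
  have h2late : ∀ x ∈ Ioo (0:ℝ) 1, 1/2 ≤ x → deriv (deriv H) x ≤ -c := by
    intro x hx h12
    refine (h2anti hhalf hx h12).trans ?_
    simp only [hc_def]; linarith [h2half]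
  have hmono4 : MonotoneOn (fun x => -φ x - c*x) (Icc (1/2) 1) := by
    refine monotoneOn_of_deriv_nonneg (convex_Icc _ _)
      (((φcont.mono (Icc_subset_Icc (by norm_num) le_rfl)).neg).sub
        (continuousOn_const.mul continuousOn_id)) ?_ ?_
    all_goals
      intro x hx
      rw [interior_Icc] at hx
      have hx' : x ∈ Ioo (0:ℝ) 1 := ⟨by linarith [hx.1], hx.2⟩
      have heq : φ =ᶠ[nhds x] deriv H :=
        Filter.eventuallyEq_of_mem (isOpen_Ioo.mem_nhds hx') hderiv_eq
      have hder : HasDerivAt φ (deriv (deriv H) x) x :=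
        ((hd1diff x hx').hasDerivAt).congr_of_eventuallyEq heq
    · have hg : HasDerivAt (fun x => -φ x - c*x) (-deriv (deriv H) x - c*1) x :=
        (hder.neg).sub ((hasDerivAt_id x).const_mul c)
      exact hg.differentiableAt.differentiableWithinAt
    · have hg : HasDerivAt (fun x => -φ x - c*x) (-deriv (deriv H) x - c*1) x :=
        (hder.neg).sub ((hasDerivAt_id x).const_mul c)
      rw [hg.deriv]
      have := h2late x hx' hx.1.le
      linarith
  have hkey := hmono4 (⟨by norm_num, by norm_num⟩ : (1:ℝ)/2 ∈ Icc (1/2:ℝ) 1)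
    (⟨by norm_num, le_rfl⟩ : (1:ℝ) ∈ Icc (1/2:ℝ) 1) (by norm_num)
  simp only at hkey
  have hφhalf : φ (1/2) = deriv H (1/2) := hderiv_eq _ hhalf
  have hφhalf_le : φ (1/2) ≤ 4 * κ := by
    rw [hφhalf]; exact h1bound _ ⟨by linarith, by norm_num⟩
  have hφ1 : 0 < φ 1 := hpos 1 ⟨one_pos, le_rfl⟩
  -- hkey : -φ(1/2) - c/2 ≤ -φ 1 - c
  simp only [hc_def] at hkey hφ1 hφhalf_le
  nlinarith [hm, hκ, hkey, hφ1, hφhalf_le]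

set_option maxHeartbeats 1000000 in
lemma overshoot_aux (n C κ : ℝ) (hn0 : 0 < n) (hn : n < 3/2) (hC : 0 < C)
    (hκ1 : 1 ≤ κ) (hκn : κ ^ (-n) ≤ 1/(4*C))
    (H : ℝ → ℝ) (hH : ShootSolZero n C κ H) :
    ∀ x ∈ Set.Ioc (0:ℝ) 1, 0 < H x ∧ 0 < derivWithin H (Set.Icc 0 1) x := by
  have hκ : 0 < κ := lt_of_lt_of_le one_pos hκ1
  obtain ⟨hC1, hC3, hH0, -, -, hAsym⟩ := hH
  have hIoo : Ioo (0:ℝ) 1 ⊆ Icc 0 1 := Ioo_subset_Icc_self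
  -- the asymptotics apply on all of (0,1)
  have hcond : ∀ x ∈ Ioo (0:ℝ) 1,
      κ ^ (-n) * (x ^ (3 - 2*n) + x ^ (4 - 2*n)) ≤ 1/(2*C) := by
    intro x hx
    have h1 : x ^ (3 - 2*n) ≤ 1 :=
      Real.rpow_le_one hx.1.le hx.2.le (by linarith)
    have h2 : x ^ (4 - 2*n) ≤ 1 :=
      Real.rpow_le_one hx.1.le hx.2.le (by linarith)
    have hp : (0:ℝ) < κ ^ (-n) := Real.rpow_pos_of_pos hκ _
    calc κ ^ (-n) * (x ^ (3 - 2*n) + x ^ (4 - 2*n)) ≤ κ ^ (-n) * 2 := by nlinarith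
      _ ≤ (1/(4*C)) * 2 := by nlinarith
      _ = 1/(2*C) := by field_simp; ring
  have hcond' : ∀ x ∈ Ioo (0:ℝ) 1,
      κ ^ (-n) * (x ^ (3 - 2*n) + x ^ (4 - 2*n)) ≤ 1/C := fun x hx =>
    (hcond x hx).trans (by rw [div_le_div_iff₀ (by positivity) hC]; linarith)
  -- pointwise bounds on (0,1)
  have hHlow : ∀ x ∈ Ioo (0:ℝ) 1, κ * x ^ 2 / 2 ≤ H x := by
    intro x hx
    obtain ⟨-, hb0, -, -⟩ := hAsym x hx (hcond' x hx)
    have : C * κ * x ^ 2 * (κ ^ (-n) * (x ^ (3-2*n) + x ^ (4-2*n))) ≤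
        C * κ * x ^ 2 * (1/(2*C)) := mul_le_mul_of_nonneg_left (hcond x hx) (mul_pos (mul_pos hC hκ) (pow_pos hx.1 2)).le
    rw [abs_le] at hb0
    have h2 : C * κ * x ^ 2 * (1/(2*C)) = κ * x ^ 2 / 2 := by field_simp
    nlinarith [hb0.1]
  have hdlow : ∀ x ∈ Ioo (0:ℝ) 1, κ * x ≤ deriv H x := by
    intro x hx
    obtain ⟨-, -, hb1, -⟩ := hAsym x hx (hcond' x hx)
    have : C * κ * x * (κ ^ (-n) * (x ^ (3-2*n) + x ^ (4-2*n))) ≤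
        C * κ * x * (1/(2*C)) := mul_le_mul_of_nonneg_left (hcond x hx) (mul_pos (mul_pos hC hκ) hx.1).le
    rw [abs_le] at hb1
    have h2 : C * κ * x * (1/(2*C)) = κ * x / 2 := by field_simp
    nlinarith [hb1.1]
  have hdiff : ∀ x ∈ Ioo (0:ℝ) 1, DifferentiableAt ℝ H x := fun x hx =>
    ((hC3 x hx).contDiffAt (isOpen_Ioo.mem_nhds hx)).differentiableAt (by norm_num)
  have hderiv_eq : ∀ x ∈ Ioo (0:ℝ) 1, derivWithin H (Icc 0 1) x = deriv H x := fun x hx =>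
    (hdiff x hx).derivWithin (uniqueDiffOn_Icc one_pos x (hIoo hx))
  set φ := derivWithin H (Icc 0 1) with hφ_def
  have φcont : ContinuousOn φ (Icc 0 1) :=
    hC1.continuousOn_derivWithin (uniqueDiffOn_Icc one_pos) le_rfl
  -- limit filter at 1
  have hne : (nhdsWithin (1:ℝ) (Ioo (0:ℝ) 1)).NeBot := by
    refine mem_closure_iff_nhdsWithin_neBot.1 ?_
    rw [closure_Ioo (by norm_num : (0:ℝ) ≠ 1)]
    exact ⟨by norm_num, le_rfl⟩
  have h1mem : (1:ℝ) ∈ Icc (0:ℝ) 1 := ⟨by norm_num, le_rfl⟩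
  have hH1 : κ / 2 ≤ H 1 := by
    have hT : Tendsto H (nhdsWithin 1 (Ioo (0:ℝ) 1)) (nhds (H 1)) :=
      (hC1.continuousOn 1 h1mem).mono_left (nhdsWithin_mono _ hIoo)
    have hT2 : Tendsto (fun x : ℝ => κ * x ^ 2 / 2) (nhdsWithin 1 (Ioo (0:ℝ) 1))
        (nhds (κ / 2)) := by
      have : Tendsto (fun x : ℝ => κ * x ^ 2 / 2) (nhds 1) (nhds (κ * 1 ^ 2 / 2)) := by
        exact (Continuous.tendsto (by continuity) 1)
      simpa using this.mono_left nhdsWithin_le_nhds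
    exact le_of_tendsto_of_tendsto hT2 hT
      (eventually_nhdsWithin_of_forall fun x hx => hHlow x hx)
  have hφ1 : κ ≤ φ 1 := by
    have hT : Tendsto φ (nhdsWithin 1 (Ioo (0:ℝ) 1)) (nhds (φ 1)) :=
      (φcont 1 h1mem).mono_left (nhdsWithin_mono _ hIoo)
    have hT2 : Tendsto (fun x : ℝ => κ * x) (nhdsWithin 1 (Ioo (0:ℝ) 1)) (nhds κ) := by
      have : Tendsto (fun x : ℝ => κ * x) (nhds 1) (nhds (κ * 1)) :=
        (Continuous.tendsto (by continuity) 1)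
      simpa using this.mono_left nhdsWithin_le_nhds
    refine le_of_tendsto_of_tendsto hT2 hT
      (eventually_nhdsWithin_of_forall fun x hx => ?_)
    rw [hderiv_eq x hx]
    exact hdlow x hx
  intro x hx
  rcases eq_or_lt_of_le hx.2 with h1 | h1
  · rw [h1]
    constructor
    · linarith
    · exact lt_of_lt_of_le hκ hφ1
  · have hx' : x ∈ Ioo (0:ℝ) 1 := ⟨hx.1, h1⟩
    constructor
    · have := hHlow x hx'
      nlinarith [hx.1]
    · exact lt_of_lt_of_le
        (by nlinarith [hx.1, hdlow x hx'] : (0:ℝ) < deriv H x) (hderiv_eq x hx').ge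

set_option maxHeartbeats 1000000 in
/-- Shooting dichotomy for zero contact angle, `n ∈ (0,3/2)`: for all sufficiently small
`κ` the derivative `H_κ'` drops to `≤ 0` somewhere in `(0,1]` (undershoot), while for all
sufficiently large `κ` the solution stays positive with `H_κ' > 0` on `(0,1]`, in
particular `H_κ'(1) > 0` (overshoot). -/
theorem shooting_zero_angle (n C : ℝ) (hn0 : 0 < n) (hn : n < 3 / 2) (hC : 0 < C) :
    (∃ κ₀ > 0, ∀ κ : ℝ, 0 < κ → κ ≤ κ₀ → ∀ H : ℝ → ℝ, ShootSolZero n C κ H →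
      ∃ x' ∈ Set.Ioc (0:ℝ) 1, derivWithin H (Set.Icc 0 1) x' ≤ 0) ∧
    (∃ κ₁ > 0, ∀ κ : ℝ, κ₁ ≤ κ → ∀ H : ℝ → ℝ, ShootSolZero n C κ H →
      ∀ x ∈ Set.Ioc (0:ℝ) 1, 0 < H x ∧ 0 < derivWithin H (Set.Icc 0 1) x) := by
  have h32 : (0:ℝ) < 3 - 2*n := by linarith
  constructor
  · -- undershoot
    set p : ℝ := (3 - 2*n)⁻¹ with hp_def
    have hp0 : 0 < p := inv_pos.2 h32
    have hp : p * (3 - 2*n) = 1 := inv_mul_cancel₀ h32.ne'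
    set c₁ : ℝ := ((4*C)⁻¹) ^ (2*p) / 2 with hc₁_def
    have hc₁ : 0 < c₁ := by
      have : (0:ℝ) < ((4*C)⁻¹) ^ (2*p) := Real.rpow_pos_of_pos (by positivity) _
      simp only [hc₁_def]; linarith
    have he₁ : (1 + 2*n*p) * (1 - n) < 1 := by
      have h2 : n * (p * (3 - 2*n)) = n := by rw [hp]; ring
      nlinarith [mul_pos hn0 hp0, h2]
    obtain ⟨κ₁, hκ₁, hB1⟩ := rpow_small_beats (c₁ ^ (1-n)) ((1 + 2*n*p) * (1-n))
      (Real.rpow_pos_of_pos hc₁ _) he₁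
    obtain ⟨κ₂, hκ₂, hB2⟩ := rpow_small_beats ((5:ℝ) ^ (1-n)) (1-n)
      (Real.rpow_pos_of_pos (by norm_num) _) (by linarith)
    set κ₃ : ℝ := ((4:ℝ)⁻¹ ^ (3-2*n) * (4*C)) ^ n⁻¹ with hκ₃_def
    have hκ₃ : 0 < κ₃ := by
      apply Real.rpow_pos_of_pos
      have : (0:ℝ) < (4:ℝ)⁻¹ ^ (3-2*n) := Real.rpow_pos_of_pos (by norm_num) _
      positivity
    refine ⟨min κ₁ (min κ₂ κ₃), by positivity, fun κ hκ hκle H hH => ?_⟩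
    by_contra hcon
    push_neg at hcon
    set δ : ℝ := (κ ^ n * (4*C)⁻¹) ^ p with hδ_def
    have hbase : (0:ℝ) < κ ^ n * (4*C)⁻¹ := by
      have : (0:ℝ) < κ ^ n := Real.rpow_pos_of_pos hκ _
      positivity
    have hδ0 : 0 < δ := Real.rpow_pos_of_pos hbase _
    have hκn : κ ^ n ≤ 4⁻¹ ^ (3-2*n) * (4*C) := by
      have h1 : κ ≤ κ₃ := hκle.trans ((min_le_right _ _).trans (min_le_right _ _))
      have h2 := Real.rpow_le_rpow hκ.le h1 hn0.le
      rwa [hκ₃_def, Real.rpow_inv_rpow (by positivity) hn0.ne'] at h2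
    have hδ4 : δ ≤ 1/4 := by
      have h1 : κ ^ n * (4*C)⁻¹ ≤ (4:ℝ)⁻¹ ^ (3-2*n) := by
        have := mul_le_mul_of_nonneg_right hκn (by positivity : (0:ℝ) ≤ (4*C)⁻¹)
        calc κ ^ n * (4*C)⁻¹ ≤ 4⁻¹ ^ (3-2*n) * (4*C) * (4*C)⁻¹ := this
          _ = (4:ℝ)⁻¹ ^ (3-2*n) := by field_simp
      have h2 : δ ≤ ((4:ℝ)⁻¹ ^ (3-2*n)) ^ p :=
        Real.rpow_le_rpow hbase.le h1 hp0.le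
      have h3 : (((4:ℝ)⁻¹ ^ (3-2*n)) ^ p : ℝ) = (4:ℝ)⁻¹ := by
        rw [← Real.rpow_mul (by norm_num : (0:ℝ) ≤ 4⁻¹), mul_comm (3-2*n) p, hp,
          Real.rpow_one]
      rw [h3] at h2
      linarith
    have hδ31 : δ ^ (3-2*n) = κ ^ n * (4*C)⁻¹ := by
      rw [hδ_def, ← Real.rpow_mul hbase.le, hp, Real.rpow_one]
    have hδ43 : δ ^ (4-2*n) ≤ δ ^ (3-2*n) :=
      Real.rpow_le_rpow_of_exponent_ge hδ0 (by linarith) (by linarith)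
    have hκκ : κ ^ (-n) * κ ^ n = 1 := by
      rw [← Real.rpow_add hκ]; simp
    have hδa : κ ^ (-n) * (δ ^ (3-2*n) + δ ^ (4-2*n)) ≤ 1/(2*C) := by
      have hκnn : (0:ℝ) ≤ κ ^ (-n) := (Real.rpow_pos_of_pos hκ _).le
      have h1 : κ ^ (-n) * (δ ^ (3-2*n) + δ ^ (4-2*n)) ≤
          κ ^ (-n) * (2 * (κ ^ n * (4*C)⁻¹)) := by
        apply mul_le_mul_of_nonneg_left _ hκnn
        rw [hδ31] at hδ43 ⊢
        linarith
      have h2 : κ ^ (-n) * (2 * (κ ^ n * (4*C)⁻¹)) = (κ ^ (-n) * κ ^ n) * (2 * (4*C)⁻¹) := by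
        ring
      rw [h2, hκκ, one_mul] at h1
      calc κ ^ (-n) * (δ ^ (3-2*n) + δ ^ (4-2*n)) ≤ 2 * (4*C)⁻¹ := h1
        _ = 1/(2*C) := by field_simp; ring
    -- identity for hm1
    have hδ2 : δ ^ 2 = κ ^ (2*n*p) * ((4*C)⁻¹) ^ (2*p) := by
      have h1 : δ ^ 2 = δ ^ ((2:ℕ):ℝ) := by
        rw [Real.rpow_natCast]
      rw [h1, hδ_def, ← Real.rpow_mul hbase.le,
        Real.mul_rpow (Real.rpow_pos_of_pos hκ n).le (by positivity),
        ← Real.rpow_mul hκ.le]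
      norm_num
      ring_nf
    have heq1 : κ * δ ^ 2 / 2 = c₁ * κ ^ ((1:ℝ) + 2*n*p) := by
      have h1 : κ ^ ((1:ℝ) + 2*n*p) = κ * κ ^ (2*n*p) := by
        rw [Real.rpow_add hκ, Real.rpow_one]
      rw [hδ2, h1, hc₁_def]; ring
    have heq2 : (κ * δ ^ 2 / 2) ^ (1-n) = c₁ ^ (1-n) * κ ^ ((1 + 2*n*p) * (1-n)) := by
      rw [heq1, Real.mul_rpow hc₁.le (Real.rpow_pos_of_pos hκ _).le,
        ← Real.rpow_mul hκ.le]
    have hm1 : 100 * κ < (κ * δ ^ 2 / 2) ^ (1-n) := by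
      rw [heq2]
      exact hB1 κ hκ (hκle.trans (min_le_left _ _))
    have hm2 : 100 * κ < (5 * κ) ^ (1-n) := by
      rw [Real.mul_rpow (by norm_num) hκ.le]
      exact hB2 κ hκ (hκle.trans ((min_le_right _ _).trans (min_le_left _ _)))
    exact undershoot_aux n C κ δ hn0 hn hC hκ hδ0 hδ4 hδa hm1 hm2 H hH hcon
  · -- overshoot
    refine ⟨max 1 ((4*C) ^ n⁻¹), lt_of_lt_of_le one_pos (le_max_left _ _),
      fun κ hκle H hH => ?_⟩
    have hκ1 : 1 ≤ κ := (le_max_left _ _).trans hκle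
    have hκ : 0 < κ := lt_of_lt_of_le one_pos hκ1
    have hκn : κ ^ (-n) ≤ 1/(4*C) := by
      have h1 : (4*C) ^ n⁻¹ ≤ κ := (le_max_right _ _).trans hκle
      have h2 := Real.rpow_le_rpow (by positivity) h1 hn0.le
      rw [Real.rpow_inv_rpow (by positivity) hn0.ne'] at h2
      rw [Real.rpow_neg hκ.le]
      rw [one_div]
      exact inv_anti₀ (by positivity) h2
    exact overshoot_aux n C κ hn0 hn hC hκ1 hκn H hH
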